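/- First-order necessary condition (Fritz-John) for local efficiency in the smooth bi-objective unconstrained case: if x* ∈ R^d is locally efficient for continuously differentiable f₁, f₂, then there exist λ₁, λ₂ ≥ 0 with λ₁ + λ₂ = 1 and λ₁∇f₁(x*) + λ₂∇f₂(x*) = 0. -/

import Mathlib

open Filter Topology

/-- If a function has negative derivative at 0, it is eventually smaller than its value
at 0 for small positive arguments. -/
lemma eventually_lt_of_hasDerivAt_neg {φ : ℝ → ℝ} {a : ℝ} (h : HasDerivAt φ a 0)
    (ha : a < 0) : ∀ᶠ t in 𝓝[>] (0 : ℝ), φ t < φ 0 := by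
  have hs : Filter.Tendsto (slope φ 0) (𝓝[≠] (0:ℝ)) (𝓝 a) :=
    hasDerivAt_iff_tendsto_slope.mp h
  have h1 : ∀ᶠ t in 𝓝[≠] (0:ℝ), slope φ 0 t < 0 := hs.eventually (Iio_mem_nhds ha)
  have h2 : ∀ᶠ t in 𝓝[>] (0:ℝ), slope φ 0 t < 0 :=
    h1.filter_mono (nhdsWithin_mono _ (fun t ht => ne_of_gt ht))
  filter_upwards [h2, self_mem_nhdsWithin] with t hslope ht
  have ht' : (0:ℝ) < t := ht
  have h3 : t⁻¹ * (φ t - φ 0) < 0 := by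
    simpa [slope, sub_zero, div_eq_mul_inv, mul_comm] using hslope
  nlinarith [inv_pos.mpr ht', h3]

/-- Fritz-John first-order necessary condition: if `x*` is locally efficient for
continuously differentiable `f₁, f₂ : ℝ^d → ℝ`, then there are `λ₁, λ₂ ≥ 0` with
`λ₁ + λ₂ = 1` and `λ₁ ∇f₁(x*) + λ₂ ∇f₂(x*) = 0`. -/
theorem fritz_john_necessary (d : ℕ) (f₁ f₂ : EuclideanSpace ℝ (Fin d) → ℝ)
    (h₁ : ContDiff ℝ 1 f₁) (h₂ : ContDiff ℝ 1 f₂)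
    (xs : EuclideanSpace ℝ (Fin d))
    (hle : ∃ ε > (0 : ℝ), ¬ ∃ y : EuclideanSpace ℝ (Fin d), ‖y - xs‖ ≤ ε ∧
      (f₁ y ≤ f₁ xs ∧ f₂ y ≤ f₂ xs) ∧ (f₁ y < f₁ xs ∨ f₂ y < f₂ xs)) :
    ∃ l₁ l₂ : ℝ, 0 ≤ l₁ ∧ 0 ≤ l₂ ∧ l₁ + l₂ = 1 ∧
      l₁ • gradient f₁ xs + l₂ • gradient f₂ xs = 0 := by
  by_contra hc
  push_neg at hc
  -- 0 is not in the segment between the two gradients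
  have h0 : (0 : EuclideanSpace ℝ (Fin d)) ∉ segment ℝ (gradient f₁ xs) (gradient f₂ xs) := by
    intro hmem
    obtain ⟨a, b, ha, hb, hab, habv⟩ := hmem
    exact hc a b ha hb hab habv
  have hconv : Convex ℝ (segment ℝ (gradient f₁ xs) (gradient f₂ xs)) := convex_segment _ _
  have hclosed : IsClosed (segment ℝ (gradient f₁ xs) (gradient f₂ xs)) := by
    rw [segment_eq_image ℝ]
    exact (isCompact_Icc.image (by continuity)).isClosed
  obtain ⟨f, u, hfu, hu0⟩ := geometric_hahn_banach_closed_point hconv hclosed h0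
  simp only [map_zero] at hu0
  -- descent direction v
  set v : EuclideanSpace ℝ (Fin d) :=
    (InnerProductSpace.toDual ℝ (EuclideanSpace ℝ (Fin d))).symm f with hv
  have hinner : ∀ w : EuclideanSpace ℝ (Fin d), (inner ℝ v w : ℝ) = f w := fun w =>
    InnerProductSpace.toDual_symm_apply
  have hfg₁ : f (gradient f₁ xs) < 0 :=
    lt_trans (hfu _ (left_mem_segment ℝ _ _)) hu0
  have hfg₂ : f (gradient f₂ xs) < 0 :=
    lt_trans (hfu _ (right_mem_segment ℝ _ _)) hu0
  -- derivatives of t ↦ fᵢ (xs + t • v) at 0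
  have hcurve : HasDerivAt (fun t : ℝ => xs + t • v) v 0 := by
    simpa using ((hasDerivAt_id (0:ℝ)).smul_const v).const_add xs
  have hderiv : ∀ (g : EuclideanSpace ℝ (Fin d) → ℝ), ContDiff ℝ 1 g →
      HasDerivAt (fun t : ℝ => g (xs + t • v)) (inner ℝ (gradient g xs) v : ℝ) 0 := by
    intro g hg
    have hdiff : DifferentiableAt ℝ g xs := (hg.differentiable one_ne_zero).differentiableAt
    have hgrad := hdiff.hasGradientAt.hasFDerivAt
    have hx : xs = xs + (0:ℝ) • v := by simp
    rw [hx] at hgrad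
    have := hgrad.comp_hasDerivAt 0 hcurve
    simpa [InnerProductSpace.toDual_apply_apply, Function.comp_def] using this
  have hd₁ := hderiv f₁ h₁
  have hd₂ := hderiv f₂ h₂
  have hneg₁ : (inner ℝ (gradient f₁ xs) v : ℝ) < 0 := by
    rw [real_inner_comm, hinner]; exact hfg₁
  have hneg₂ : (inner ℝ (gradient f₂ xs) v : ℝ) < 0 := by
    rw [real_inner_comm, hinner]; exact hfg₂
  obtain ⟨ε, hε, hno⟩ := hle
  have hev₁ := eventually_lt_of_hasDerivAt_neg hd₁ hneg₁
  have hev₂ := eventually_lt_of_hasDerivAt_neg hd₂ hneg₂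
  have hsmall : ∀ᶠ t in 𝓝[>] (0:ℝ), t * ‖v‖ ≤ ε := by
    have hpos : (0:ℝ) < ε / (‖v‖ + 1) := div_pos hε (by positivity)
    have hev : ∀ᶠ t in 𝓝 (0:ℝ), t < ε / (‖v‖ + 1) := by
      have : Set.Iio (ε / (‖v‖ + 1)) ∈ 𝓝 (0:ℝ) := Iio_mem_nhds hpos
      exact this
    filter_upwards [hev.filter_mono nhdsWithin_le_nhds, self_mem_nhdsWithin] with t ht ht0
    have ht0' : (0:ℝ) < t := ht0
    have h1 : t * ‖v‖ ≤ t * (‖v‖ + 1) := by nlinarith [ht0'.le]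
    have h2 : t * (‖v‖ + 1) < ε := by
      rw [← lt_div_iff₀ (by positivity : (0:ℝ) < ‖v‖ + 1)]; exact ht
    linarith
  obtain ⟨t, hlt₁, hrest⟩ := (hev₁.and (hev₂.and (hsmall.and self_mem_nhdsWithin))).exists
  obtain ⟨hlt₂, htv, ht0⟩ := hrest
  simp only [zero_smul, add_zero] at hlt₁ hlt₂
  apply hno
  refine ⟨xs + t • v, ?_, ⟨hlt₁.le, hlt₂.le⟩, Or.inl hlt₁⟩
  have : ‖xs + t • v - xs‖ = t * ‖v‖ := by
    simp [norm_smul, abs_of_pos (show (0:ℝ) < t from ht0)]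
  rw [this]; exact htv
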